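/- arXiv:1810.10067 — 3 statements merged into one kernel-verified Lean document; each statement's English description precedes it below -/
import Mathlib

section
/- Let A₁,…,A_n ∈ B(H), let 0 ≤ α ≤ 1, and let p, q > 1 with 1/p + 1/q = 1. Then ‖Σ_{i=1}^n A_i‖ ≤ (Σ_{i=1}^n ‖|A_i|^α‖^p)^{1/p} · (Σ_{i=1}^n ‖|A_i*|^{1-α}‖^q)^{1/q}. -/
open scoped InnerProductSpace
open ContinuousLinearMap

/-- The absolute value `|A| = (A^*A)^{1/2}` of a bounded operator, via the
continuous functional calculus. -/
noncomputable def oabs {H : Type*} [NormedAddCommGroup H] [InnerProductSpace ℂ H]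
    [CompleteSpace H] (A : H →L[ℂ] H) : H →L[ℂ] H :=
  cfc Real.sqrt (adjoint A * A)

section Aux

variable {H : Type*} [NormedAddCommGroup H] [InnerProductSpace ℂ H] [CompleteSpace H]

lemma oabs_nonneg (A : H →L[ℂ] H) : (0 : H →L[ℂ] H) ≤ oabs A := by
  rw [oabs]
  exact cfc_nonneg fun x _ => Real.sqrt_nonneg x

lemma oabs_mul_self (A : H →L[ℂ] H) : oabs A * oabs A = adjoint A * A := by
  have hpos : (0 : H →L[ℂ] H) ≤ adjoint A * A := by
    rw [← star_eq_adjoint]; exact star_mul_self_nonneg A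
  rw [oabs, ← cfc_mul ..]
  have h := cfc_congr (a := adjoint A * A)
    (f := fun x : ℝ => Real.sqrt x * Real.sqrt x) (g := id)
    (fun x hx => Real.mul_self_sqrt (spectrum_nonneg_of_nonneg hpos hx))
  rw [h, cfc_id ℝ (adjoint A * A)]

lemma norm_oabs (A : H →L[ℂ] H) : ‖oabs A‖ = ‖A‖ := by
  have hsa : IsSelfAdjoint (oabs A) := (oabs_nonneg A).isSelfAdjoint
  have h : ‖oabs A‖ * ‖oabs A‖ = ‖A‖ * ‖A‖ := by
    calc ‖oabs A‖ * ‖oabs A‖ = ‖star (oabs A) * oabs A‖ :=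
          (CStarRing.norm_star_mul_self).symm
      _ = ‖oabs A * oabs A‖ := by rw [hsa.star_eq]
      _ = ‖star A * A‖ := by rw [oabs_mul_self, star_eq_adjoint]
      _ = ‖A‖ * ‖A‖ := CStarRing.norm_star_mul_self
  exact (mul_self_inj (norm_nonneg _) (norm_nonneg _)).mp h

lemma norm_cfc_rpow [Nontrivial H] (a : H →L[ℂ] H) (ha : 0 ≤ a) {β : ℝ} (hβ : 0 ≤ β) :
    ‖cfc (fun t : ℝ => t ^ β) a‖ = ‖a‖ ^ β := by
  have hsa : IsSelfAdjoint a := ha.isSelfAdjoint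
  have hcont : ContinuousOn (fun t : ℝ => t ^ β) (spectrum ℝ a) :=
    continuousOn_id.rpow_const fun x _ => Or.inr hβ
  have hmax := IsGreatest.norm_cfc (fun t : ℝ => t ^ β) a hcont hsa
  refine hmax.unique ?_
  constructor
  · exact ⟨‖a‖, CStarAlgebra.norm_mem_spectrum_of_nonneg ha,
      by simp only []; rw [Real.norm_eq_abs, abs_of_nonneg (Real.rpow_nonneg (norm_nonneg _) _)]⟩
  · rintro x ⟨t, ht, rfl⟩
    have h0 : 0 ≤ t := spectrum_nonneg_of_nonneg ha ht
    have h1 : t ≤ ‖a‖ := by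
      simpa [Real.norm_of_nonneg h0] using spectrum.norm_le_norm_of_mem ht
    simp only []
    rw [Real.norm_eq_abs, abs_of_nonneg (Real.rpow_nonneg h0 _)]
    exact Real.rpow_le_rpow h0 h1 hβ

end Aux

theorem stmt8 {H : Type*} [NormedAddCommGroup H] [InnerProductSpace ℂ H] [CompleteSpace H]
    (n : ℕ) (A : Fin n → (H →L[ℂ] H))
    (α : ℝ) (hα0 : 0 ≤ α) (hα1 : α ≤ 1)
    (p q : ℝ) (hp : 1 < p) (hq : 1 < q) (hpq : 1 / p + 1 / q = 1) :
    ‖∑ i, A i‖ ≤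
      (∑ i, ‖cfc (fun t : ℝ => t ^ α) (oabs (A i))‖ ^ p) ^ (1 / p) *
        (∑ i, ‖cfc (fun t : ℝ => t ^ (1 - α)) (oabs (adjoint (A i)))‖ ^ q) ^ (1 / q) := by
  rcases subsingleton_or_nontrivial H with hs | hs
  · have h0 : (∑ i, A i) = 0 := Subsingleton.elim _ _
    rw [h0, norm_zero]
    apply mul_nonneg <;>
      exact Real.rpow_nonneg
        (Finset.sum_nonneg fun i _ => Real.rpow_nonneg (norm_nonneg _) _) _
  · have h1 : ∀ i, ‖cfc (fun t : ℝ => t ^ α) (oabs (A i))‖ = ‖A i‖ ^ α := fun i => by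
      rw [norm_cfc_rpow _ (oabs_nonneg _) hα0, norm_oabs]
    have h2 : ∀ i, ‖cfc (fun t : ℝ => t ^ (1 - α)) (oabs (adjoint (A i)))‖
        = ‖A i‖ ^ (1 - α) := fun i => by
      rw [norm_cfc_rpow _ (oabs_nonneg _) (by linarith : (0:ℝ) ≤ 1 - α), norm_oabs,
        ← star_eq_adjoint, norm_star]
    simp only [h1, h2]
    have hconj : Real.HolderConjugate p q :=
      Real.holderConjugate_iff.mpr ⟨hp, by rw [← one_div, ← one_div]; exact hpq⟩
    have key := Real.inner_le_Lp_mul_Lq (s := Finset.univ)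
      (fun i => ‖A i‖ ^ α) (fun i => ‖A i‖ ^ (1 - α)) hconj
    have e1 : ∀ i : Fin n, |‖A i‖ ^ α| = ‖A i‖ ^ α := fun i =>
      abs_of_nonneg (Real.rpow_nonneg (norm_nonneg _) _)
    have e2 : ∀ i : Fin n, |‖A i‖ ^ (1 - α)| = ‖A i‖ ^ (1 - α) := fun i =>
      abs_of_nonneg (Real.rpow_nonneg (norm_nonneg _) _)
    simp only [e1, e2] at key
    refine le_trans (le_trans (norm_sum_le _ _) (le_of_eq ?_)) key
    refine Finset.sum_congr rfl fun i _ => ?_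
    rcases eq_or_lt_of_le (norm_nonneg (A i)) with h | h
    · rw [← h]
      rcases eq_or_ne α 0 with rfl | hα'
      · norm_num
      · rw [Real.zero_rpow hα', zero_mul]
    · rw [← Real.rpow_add h, add_sub_cancel, Real.rpow_one]
end

section
/- Let A ∈ B(H) have Cartesian decomposition A = P + iQ, where P and Q are selfadjoint, and let f, g be nonnegative continuous functions on [0,∞) satisfying f(t)g(t) = t for all t ≥ 0. Then for all vectors x, y ∈ H, |⟨Ax, y⟩| ≤ ‖f(|P|)x‖ · ‖g(|P|)y‖ + ‖f(|Q|)x‖ · ‖g(|Q|)y‖. -/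
open scoped InnerProductSpace
open ContinuousLinearMap

section aux
variable {H : Type*} [NormedAddCommGroup H] [InnerProductSpace ℂ H] [CompleteSpace H]

private lemma oabs_eq (P : H →L[ℂ] H) (hP : IsSelfAdjoint P) :
    oabs P = cfc (fun t : ℝ => |t|) P := by
  have h0 : cfc (fun t : ℝ => t) P = P := cfc_id ℝ P
  have h1 : adjoint P * P = cfc (fun t : ℝ => t * t) P := by
    rw [cfc_mul (fun t : ℝ => t) (fun t : ℝ => t) P, h0, hP.adjoint_eq]
  rw [oabs, h1, ← cfc_comp Real.sqrt (fun t : ℝ => t * t) P]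
  exact cfc_congr fun t _ => Real.sqrt_mul_self_eq_abs t

private lemma cfc_oabs_eq (P : H →L[ℂ] H) (hP : IsSelfAdjoint P) (f : ℝ → ℝ)
    (hf : Continuous f) : cfc f (oabs P) = cfc (fun t : ℝ => f |t|) P := by
  rw [oabs_eq P hP, ← cfc_comp f (fun t : ℝ => |t|) P]
  rfl

private lemma norm_cfc_eq (P : H →L[ℂ] H) (u v : ℝ → ℝ)
    (hu : Continuous u) (hv : Continuous v) (h : ∀ t, |u t| = |v t|) (x : H) :
    ‖cfc u P x‖ = ‖cfc v P x‖ := by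
  set B := cfc u P with hBdef
  set C := cfc v P with hCdef
  have hB : IsSelfAdjoint B := cfc_predicate u P
  have hC : IsSelfAdjoint C := cfc_predicate v P
  have hsq : B * B = C * C := by
    rw [hBdef, hCdef, ← cfc_mul u u P, ← cfc_mul v v P]
    exact cfc_congr fun t _ => by
      rw [← abs_mul_abs_self (u t), ← abs_mul_abs_self (v t), h t]
  have e : ∀ (B : H →L[ℂ] H), IsSelfAdjoint B → (⟪B x, B x⟫_ℂ) = ⟪x, (B * B) x⟫_ℂ := by
    intro B hB
    rw [ContinuousLinearMap.mul_apply]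
    nth_rewrite 1 [← hB.adjoint_eq]
    exact adjoint_inner_left B (B x) x
  have key : (⟪B x, B x⟫_ℂ) = ⟪C x, C x⟫_ℂ := by rw [e B hB, e C hC, hsq]
  have h2 : ‖B x‖ ^ 2 = ‖C x‖ ^ 2 := by
    rw [← inner_self_eq_norm_sq (𝕜 := ℂ), ← inner_self_eq_norm_sq (𝕜 := ℂ), key]
  have := congrArg Real.sqrt h2
  simpa [Real.sqrt_sq, norm_nonneg] using this

private lemma key2 (P : H →L[ℂ] H) (hP : IsSelfAdjoint P) (h₁ h₂ : ℝ → ℝ)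
    (hc1 : Continuous h₁) (hc2 : Continuous h₂) (hid : ∀ t, h₁ t * h₂ t = t) (x y : H) :
    ‖⟪P x, y⟫_ℂ‖ ≤ ‖cfc h₂ P x‖ * ‖cfc h₁ P y‖ := by
  have hPdecomp : P = cfc h₁ P * cfc h₂ P := by
    rw [← cfc_mul h₁ h₂ P]
    conv_lhs => rw [← cfc_id ℝ P hP]
    exact cfc_congr fun t _ => (hid t).symm
  have h1sa : IsSelfAdjoint (cfc h₁ P) := cfc_predicate h₁ P
  have : (⟪P x, y⟫_ℂ) = ⟪cfc h₂ P x, cfc h₁ P y⟫_ℂ := by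
    conv_lhs => rw [hPdecomp]
    rw [ContinuousLinearMap.mul_apply]
    nth_rewrite 1 [← h1sa.adjoint_eq]
    exact adjoint_inner_left _ _ _
  rw [this]
  exact norm_inner_le_norm _ _

private lemma key (P : H →L[ℂ] H) (hP : IsSelfAdjoint P) (f g : ℝ → ℝ)
    (hf : Continuous f) (hg : Continuous g)
    (hf0 : ∀ t : ℝ, 0 ≤ t → 0 ≤ f t) (hg0 : ∀ t : ℝ, 0 ≤ t → 0 ≤ g t)
    (hfg : ∀ t : ℝ, 0 ≤ t → f t * g t = t) (x y : H) :
    ‖⟪P x, y⟫_ℂ‖ ≤ ‖cfc f (oabs P) x‖ * ‖cfc g (oabs P) y‖ := by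
  rw [cfc_oabs_eq P hP f hf, cfc_oabs_eq P hP g hg]
  have hfabs : Continuous fun t : ℝ => f |t| := hf.comp continuous_abs
  have hgabs : Continuous fun t : ℝ => g |t| := hg.comp continuous_abs
  have h00 : f 0 = 0 ∨ g 0 = 0 := by
    have := hfg 0 le_rfl
    simpa [mul_eq_zero] using this
  rcases h00 with h0 | h0
  · -- use odd extension of f
    set F : ℝ → ℝ := fun t => if (0:ℝ) ≤ t then f t else -f (-t) with hF
    have hFc : Continuous F := by
      apply Continuous.if_le hf (by fun_prop) continuous_const continuous_id
      intro t ht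
      simp only [id_eq] at ht
      rw [← ht]
      simp [h0]
    have hid : ∀ t, (fun t : ℝ => g |t|) t * F t = t := by
      intro t
      rcases le_or_gt 0 t with ht | ht
      · simp only [hF, if_pos ht, abs_of_nonneg ht]
        rw [mul_comm]; exact hfg t ht
      · simp only [hF, if_neg (not_le.mpr ht), abs_of_neg ht]
        rw [mul_neg, mul_comm (g (-t)) _, hfg (-t) (by linarith)]; ring
    have hle := key2 P hP (fun t : ℝ => g |t|) F hgabs hFc hid x y
    have heq : ‖cfc F P x‖ = ‖cfc (fun t : ℝ => f |t|) P x‖ := by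
      apply norm_cfc_eq P F _ hFc hfabs
      intro t
      rcases le_or_gt 0 t with ht | ht
      · simp [hF, if_pos ht, abs_of_nonneg ht]
      · simp [hF, if_neg (not_le.mpr ht), abs_of_neg ht]
    rw [heq] at hle
    exact hle
  · -- use odd extension of g
    set G : ℝ → ℝ := fun t => if (0:ℝ) ≤ t then g t else -g (-t) with hG
    have hGc : Continuous G := by
      apply Continuous.if_le hg (by fun_prop) continuous_const continuous_id
      intro t ht
      simp only [id_eq] at ht
      rw [← ht]
      simp [h0]
    have hid : ∀ t, G t * (fun t : ℝ => f |t|) t = t := by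
      intro t
      rcases le_or_gt 0 t with ht | ht
      · simp only [hG, if_pos ht, abs_of_nonneg ht]
        rw [mul_comm]; exact hfg t ht
      · simp only [hG, if_neg (not_le.mpr ht), abs_of_neg ht]
        rw [neg_mul, mul_comm (g (-t)) _, hfg (-t) (by linarith)]; ring
    have hle := key2 P hP G (fun t : ℝ => f |t|) hGc hfabs hid x y
    have heq : ‖cfc G P y‖ = ‖cfc (fun t : ℝ => g |t|) P y‖ := by
      apply norm_cfc_eq P G _ hGc hgabs
      intro t
      rcases le_or_gt 0 t with ht | ht
      · simp [hG, if_pos ht, abs_of_nonneg ht]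
      · simp [hG, if_neg (not_le.mpr ht), abs_of_neg ht]
    rw [heq] at hle
    exact hle

end aux

theorem stmt9 {H : Type*} [NormedAddCommGroup H] [InnerProductSpace ℂ H] [CompleteSpace H]
    (A P Q : H →L[ℂ] H) (hP : IsSelfAdjoint P) (hQ : IsSelfAdjoint Q)
    (hA : A = P + Complex.I • Q) (f g : ℝ → ℝ) (hf : Continuous f) (hg : Continuous g)
    (hf0 : ∀ t : ℝ, 0 ≤ t → 0 ≤ f t) (hg0 : ∀ t : ℝ, 0 ≤ t → 0 ≤ g t)
    (hfg : ∀ t : ℝ, 0 ≤ t → f t * g t = t)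
    (x y : H) :
    ‖⟪A x, y⟫_ℂ‖ ≤
      ‖cfc f (oabs P) x‖ * ‖cfc g (oabs P) y‖ +
        ‖cfc f (oabs Q) x‖ * ‖cfc g (oabs Q) y‖ := by
  have hsplit : (⟪A x, y⟫_ℂ) = ⟪P x, y⟫_ℂ + (starRingEnd ℂ) Complex.I * ⟪Q x, y⟫_ℂ := by
    rw [hA]
    simp [inner_add_left, inner_smul_left]
    ring
  calc ‖⟪A x, y⟫_ℂ‖ ≤ ‖⟪P x, y⟫_ℂ‖ + ‖(starRingEnd ℂ) Complex.I * ⟪Q x, y⟫_ℂ‖ := by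
        rw [hsplit]; exact norm_add_le _ _
    _ = ‖⟪P x, y⟫_ℂ‖ + ‖⟪Q x, y⟫_ℂ‖ := by
        rw [norm_mul]
        simp
    _ ≤ ‖cfc f (oabs P) x‖ * ‖cfc g (oabs P) y‖ + ‖cfc f (oabs Q) x‖ * ‖cfc g (oabs Q) y‖ :=
        add_le_add (key P hP f g hf hg hf0 hg0 hfg x y) (key Q hQ f g hf hg hf0 hg0 hfg x y)
end

section
/- Let C ∈ B(H) be such that |C*|C = C*|C*|. Then the numerical radius satisfies w(C*C) ≤ (1/4) · (‖C‖ + ‖C²‖^{1/2})²; equivalently, for every unit vector x ∈ H, |⟨C*Cx, x⟩| ≤ (1/4) · (‖C‖ + ‖C²‖^{1/2})². -/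
set_option maxHeartbeats 1000000


open scoped InnerProductSpace ENNReal
open ContinuousLinearMap

lemma spectralRadius_mul_comm_le' {A : Type*} [NormedRing A] [NormedAlgebra ℂ A]
    (a b : A) : spectralRadius ℂ (a * b) ≤ spectralRadius ℂ (b * a) := by
  rw [spectralRadius, spectralRadius]
  refine iSup₂_le fun k hk => ?_
  rcases eq_or_ne k 0 with rfl | hk0
  · simp
  · have hmem : k ∈ spectrum ℂ (b * a) \ {0} := by
      rw [← spectrum.nonzero_mul_comm]; exact ⟨hk, hk0⟩
    exact le_iSup₂ (f := fun k (_ : k ∈ spectrum ℂ (b * a)) => (‖k‖₊ : ℝ≥0∞)) k hmem.1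

theorem stmt16 {H : Type*} [NormedAddCommGroup H] [InnerProductSpace ℂ H] [CompleteSpace H]
    (C : H →L[ℂ] H)
    (hC : oabs (adjoint C) * C = adjoint C * oabs (adjoint C))
    (x : H) (hx : ‖x‖ = 1) :
    ‖⟪(adjoint C * C) x, x⟫_ℂ‖ ≤ 1 / 4 * (‖C‖ + Real.sqrt ‖C ^ 2‖) ^ 2 := by
  rcases subsingleton_or_nontrivial H with hH | hH
  · exact absurd hx (by simp [Subsingleton.elim x 0])
  set P := oabs (adjoint C) with hP
  have hCC : (0 : H →L[ℂ] H) ≤ C * adjoint C := by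
    simpa [star_eq_adjoint] using mul_star_self_nonneg C
  have hPdef : P = cfc Real.sqrt (C * adjoint C) := by
    rw [hP, oabs, adjoint_adjoint]
  have hPsa : IsSelfAdjoint P := hPdef ▸ cfc_predicate Real.sqrt _
  have hP2 : P * P = C * adjoint C := by
    rw [hPdef, ← cfc_mul Real.sqrt Real.sqrt (C * adjoint C)]
    have heq : (spectrum ℝ (C * adjoint C)).EqOn (fun z => Real.sqrt z * Real.sqrt z) id :=
      fun z hz => Real.mul_self_sqrt (spectrum_nonneg_of_nonneg hCC hz)
    rw [cfc_congr heq, cfc_id ℝ _ hCC.isSelfAdjoint]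
  -- T := P * C is self-adjoint
  have hTsa : IsSelfAdjoint (P * C) := by
    rw [IsSelfAdjoint, star_mul, star_eq_adjoint, hPsa.star_eq, ← hC]
  -- (P*C)*(P*C) = (C* C)^2
  have hT2 : (P * C) * (P * C) = (adjoint C * C) * (adjoint C * C) := by
    calc (P * C) * (P * C) = (adjoint C * P) * (P * C) := by rw [← hC]
    _ = adjoint C * (P * P) * C := by noncomm_ring
    _ = adjoint C * (C * adjoint C) * C := by rw [hP2]
    _ = (adjoint C * C) * (adjoint C * C) := by noncomm_ring
  have hAC : ‖adjoint C * C‖ = ‖C‖ * ‖C‖ := by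
    rw [← star_eq_adjoint]; exact CStarRing.norm_star_mul_self
  have hACsa : IsSelfAdjoint (adjoint C * C) := by
    rw [IsSelfAdjoint, star_mul, star_eq_adjoint, star_eq_adjoint, adjoint_adjoint]
  -- ‖P*C‖ = ‖C‖^2
  have hTnorm : ‖P * C‖ = ‖C‖ ^ 2 := by
    have h1 : ‖(P * C) * (P * C)‖ = ‖P * C‖ * ‖P * C‖ := by
      nth_rewrite 1 [← hTsa.star_eq]
      exact CStarRing.norm_star_mul_self
    have h2 : ‖(adjoint C * C) * (adjoint C * C)‖ = ‖adjoint C * C‖ * ‖adjoint C * C‖ := by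
      nth_rewrite 1 [← hACsa.star_eq]
      exact CStarRing.norm_star_mul_self
    have h3 : ‖P * C‖ * ‖P * C‖ = (‖C‖ ^ 2) * (‖C‖ ^ 2) := by
      rw [← h1, hT2, h2, hAC]; ring
    exact (mul_self_inj (norm_nonneg _) (by positivity)).mp h3
  -- ‖C*P‖ = ‖C^2‖
  have hCPnorm : ‖C * P‖ = ‖C ^ 2‖ := by
    have h1 : ‖C * P‖ * ‖C * P‖ = ‖(C * P) * star (C * P)‖ := CStarRing.norm_self_mul_star.symm
    have h2 : (C * P) * star (C * P) = (C ^ 2) * star (C ^ 2) := by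
      rw [star_mul, hPsa.star_eq, star_eq_adjoint]
      calc (C * P) * (P * adjoint C) = C * (P * P) * adjoint C := by noncomm_ring
      _ = C * (C * adjoint C) * adjoint C := by rw [hP2]
      _ = (C ^ 2) * star (C ^ 2) := by rw [star_pow, star_eq_adjoint]; noncomm_ring
    have h3 : ‖C * P‖ * ‖C * P‖ = ‖C ^ 2‖ * ‖C ^ 2‖ := by
      rw [h1, h2, CStarRing.norm_self_mul_star]
    exact (mul_self_inj (norm_nonneg _) (norm_nonneg _)).mp h3
  -- key inequality ‖C‖^2 ≤ ‖C^2‖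
  have key : ‖C‖ ^ 2 ≤ ‖C ^ 2‖ := by
    have h1 : (‖P * C‖₊ : ℝ≥0∞) ≤ (‖C * P‖₊ : ℝ≥0∞) := by
      calc (‖P * C‖₊ : ℝ≥0∞) = spectralRadius ℂ (P * C) := hTsa.spectralRadius_eq_nnnorm.symm
      _ ≤ spectralRadius ℂ (C * P) := spectralRadius_mul_comm_le' P C
      _ ≤ ‖C * P‖₊ := spectrum.spectralRadius_le_nnnorm (C * P)
    have h2 : ‖P * C‖ ≤ ‖C * P‖ := by
      rw [ENNReal.coe_le_coe] at h1
      exact_mod_cast h1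
    rwa [hTnorm, hCPnorm] at h2
  have hsqrt : ‖C‖ ≤ Real.sqrt ‖C ^ 2‖ := by
    rw [show ‖C‖ = Real.sqrt (‖C‖ ^ 2) from (Real.sqrt_sq (norm_nonneg C)).symm]
    exact Real.sqrt_le_sqrt key
  -- compute the inner product
  have hinner : ‖⟪(adjoint C * C) x, x⟫_ℂ‖ = ‖C x‖ ^ 2 := by
    have : ⟪(adjoint C * C) x, x⟫_ℂ = ⟪C x, C x⟫_ℂ := adjoint_inner_left C x (C x)
    rw [this, inner_self_eq_norm_sq_to_K]
    simp [Complex.norm_real, sq_abs]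
  have hCx : ‖C x‖ ≤ ‖C‖ := by
    calc ‖C x‖ ≤ ‖C‖ * ‖x‖ := C.le_opNorm x
    _ = ‖C‖ := by rw [hx, mul_one]
  rw [hinner]
  have h0 : (0:ℝ) ≤ ‖C‖ := norm_nonneg C
  have h0' : (0:ℝ) ≤ ‖C x‖ := norm_nonneg _
  nlinarith [hsqrt, hCx, h0, h0']
end
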